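/- arXiv:math-ph/0303026 — 2 statements merged into one kernel-verified Lean document; each statement's English description precedes it below -/
import Mathlib

section
/- For the configuration C₂(m,l), the dimension of the space of all homogeneous quasi-invariant polynomials of degree n, for n even, equals [n = 0 ? 1 : n/2] + (0 if n < 2(m+l+1), 1 if n = 2(m+l+1), n/2 − m − l − 1 if n > 2(m+l+1)). -/
open MvPolynomial

/-- Evaluation at the point `(x, y) ∈ ℂ²`, as a linear map on polynomials. -/
noncomputable def evalAt (x y : ℂ) : MvPolynomial (Fin 2) ℂ →ₗ[ℂ] ℂ :=
  (MvPolynomial.aeval ![x, y]).toLinearMap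

/-- The directional derivative `a·∂_x + b·∂_y` on polynomials in two variables. -/
noncomputable def dirD (a b : ℂ) : Module.End ℂ (MvPolynomial (Fin 2) ℂ) :=
  a • (MvPolynomial.pderiv 0).toLinearMap + b • (MvPolynomial.pderiv 1).toLinearMap

/-- The submodule of quasi-invariants of the configuration `C₂(m,l)`: the line `x = 0` carries
multiplicity `m`, the line `y = 0` multiplicity `l`, and the lines `ξx ± y = 0` (normal vectors
`ξe₁ ± e₂`) multiplicity `1`, where `ξ² = (2l+1)/(2m+1)`. A polynomial `q` is quasi-invariant
if the odd normal derivatives `∂_α^{2r-1} q`, `r = 1,...,m_α`, vanish on each line. -/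
noncomputable def quasiC (m l : ℕ) (ξ : ℂ) : Submodule ℂ (MvPolynomial (Fin 2) ℂ) :=
  (⨅ r ∈ Finset.Icc 1 m, ⨅ y : ℂ,
    LinearMap.ker ((evalAt 0 y).comp ((dirD 1 0 ^ (2 * r - 1) : Module.End ℂ _) :
      MvPolynomial (Fin 2) ℂ →ₗ[ℂ] MvPolynomial (Fin 2) ℂ))) ⊓
  (⨅ r ∈ Finset.Icc 1 l, ⨅ x : ℂ,
    LinearMap.ker ((evalAt x 0).comp ((dirD 0 1 ^ (2 * r - 1) : Module.End ℂ _) :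
      MvPolynomial (Fin 2) ℂ →ₗ[ℂ] MvPolynomial (Fin 2) ℂ))) ⊓
  (⨅ t : ℂ, LinearMap.ker ((evalAt t (-(ξ * t))).comp (dirD ξ 1))) ⊓
  (⨅ t : ℂ, LinearMap.ker ((evalAt t (ξ * t)).comp (dirD ξ (-1))))

/-- The submodule of polynomials supported on a set `s` of monomials. -/
noncomputable def suppOn (s : Set (Fin 2 →₀ ℕ)) : Submodule ℂ (MvPolynomial (Fin 2) ℂ) where
  carrier := {q | ∀ d, d ∉ s → MvPolynomial.coeff d q = 0}
  add_mem' := by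
    intro p q hp hq d hd
    simp [MvPolynomial.coeff_add, hp d hd, hq d hd]
  zero_mem' := by intro d hd; simp
  smul_mem' := by
    intro c q hq d hd
    simp [MvPolynomial.coeff_smul, hq d hd]

namespace QC
open Module


noncomputable def Xp (k s : ℕ) : MvPolynomial (Fin 2) ℂ := X 0 ^ k * X 1 ^ s

lemma evalAt_Xp (x y : ℂ) (k s : ℕ) : evalAt x y (Xp k s) = x ^ k * y ^ s := by
  simp [evalAt, Xp]

lemma pderiv0_Xp (k s : ℕ) : pderiv 0 (Xp k s) = (k : ℂ) • Xp (k - 1) s := by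
  cases k with
  | zero => simp [Xp, pderiv_mul, pderiv_pow, pderiv_X_of_ne (by decide : (1:Fin 2) ≠ 0)]
  | succ k =>
    simp only [Xp, pderiv_mul, pderiv_pow, pderiv_X_of_ne (by decide : (1:Fin 2) ≠ 0),
      pderiv_X_self, Nat.succ_sub_one, smul_eq_mul, mul_zero, add_zero, mul_one,
      Nat.cast_succ, nsmul_eq_mul, smul_eq_C_mul, C_add, C_1, C_eq_coe_nat]
    push_cast
    ring

lemma pderiv1_Xp (k s : ℕ) : pderiv 1 (Xp k s) = (s : ℂ) • Xp k (s - 1) := by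
  cases s with
  | zero => simp [Xp, pderiv_mul, pderiv_pow, pderiv_X_of_ne (by decide : (0:Fin 2) ≠ 1)]
  | succ s =>
    simp only [Xp, pderiv_mul, pderiv_pow, pderiv_X_of_ne (by decide : (0:Fin 2) ≠ 1),
      pderiv_X_self, Nat.succ_sub_one, smul_eq_mul, mul_zero, zero_add, zero_mul, mul_one,
      Nat.cast_succ, nsmul_eq_mul, smul_eq_C_mul, C_add, C_1, C_eq_coe_nat]
    push_cast
    ring

lemma dirD10 (p : MvPolynomial (Fin 2) ℂ) : dirD 1 0 p = pderiv 0 p := by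
  simp [dirD]

lemma dirD01 (p : MvPolynomial (Fin 2) ℂ) : dirD 0 1 p = pderiv 1 p := by
  simp [dirD]

lemma dirD10_pow_Xp (j k s : ℕ) :
    (dirD 1 0 ^ j) (Xp k s) = (k.descFactorial j : ℂ) • Xp (k - j) s := by
  induction j with
  | zero => simp
  | succ j ih =>
    rw [pow_succ', Module.End.mul_apply, dirD10, ih, Derivation.map_smul, pderiv0_Xp,
      Nat.descFactorial_succ, smul_smul, Nat.sub_sub, Nat.cast_mul]
    ring_nf

lemma dirD01_pow_Xp (j k s : ℕ) :
    (dirD 0 1 ^ j) (Xp k s) = (s.descFactorial j : ℂ) • Xp k (s - j) := by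
  induction j with
  | zero => simp
  | succ j ih =>
    rw [pow_succ', Module.End.mul_apply, dirD01, ih, Derivation.map_smul, pderiv1_Xp,
      Nat.descFactorial_succ, smul_smul, Nat.sub_sub, Nat.cast_mul]
    ring_nf



noncomputable def Pmap (n : ℕ) : (Fin (n+1) → ℂ) →ₗ[ℂ] MvPolynomial (Fin 2) ℂ where
  toFun a := ∑ k : Fin (n+1), a k • Xp k (n - k)
  map_add' a b := by simp [add_smul, Finset.sum_add_distrib]
  map_smul' c a := by simp [smul_smul, Finset.smul_sum]

variable (n : ℕ)

lemma cond1_iff (a : Fin (n+1) → ℂ) (j : ℕ) :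
    (∀ y : ℂ, evalAt 0 y ((dirD 1 0 ^ j) (Pmap n a)) = 0) ↔
      (∀ h : j < n + 1, a ⟨j, h⟩ = 0) := by
  have key : ∀ y : ℂ, evalAt 0 y ((dirD 1 0 ^ j) (Pmap n a)) =
      ∑ k : Fin (n+1), a k * (Nat.descFactorial k j : ℂ) * 0 ^ ((k:ℕ) - j) * y ^ (n - k) := by
    intro y
    rw [Pmap]
    simp only [LinearMap.coe_mk, AddHom.coe_mk, map_sum, map_smul, dirD10_pow_Xp,
      map_smul, evalAt_Xp, smul_eq_mul]
    congr 1; funext k; ring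
  by_cases hj : j < n + 1
  · have key2 : ∀ y : ℂ, evalAt 0 y ((dirD 1 0 ^ j) (Pmap n a)) =
        a ⟨j, hj⟩ * (j.factorial : ℂ) * y ^ (n - j) := by
      intro y
      rw [key y, Finset.sum_eq_single (⟨j, hj⟩ : Fin (n+1))]
      · simp [Nat.descFactorial_self]
      · intro k _ hk
        rcases lt_or_gt_of_ne (fun h : (k:ℕ) = j => hk (by ext; exact h)) with h | h
        · simp [Nat.descFactorial_eq_zero_iff_lt.2 h]
        · rw [zero_pow (by omega : (k:ℕ) - j ≠ 0)]; ring
      · simp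
    constructor
    · intro H _
      have := H 1
      rw [key2 1] at this
      simpa [Nat.factorial_ne_zero] using this
    · intro H y
      rw [key2 y, H hj]; ring
  · constructor
    · intro _ h; exact absurd h hj
    · intro _ y
      rw [key y, Finset.sum_eq_zero]
      intro k _
      have : Nat.descFactorial k j = 0 := Nat.descFactorial_eq_zero_iff_lt.2 (by omega)
      simp [this]

lemma cond2_iff (a : Fin (n+1) → ℂ) (j : ℕ) :
    (∀ x : ℂ, evalAt x 0 ((dirD 0 1 ^ j) (Pmap n a)) = 0) ↔
      (∀ h : j ≤ n, a ⟨n - j, by omega⟩ = 0) := by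
  have key : ∀ x : ℂ, evalAt x 0 ((dirD 0 1 ^ j) (Pmap n a)) =
      ∑ k : Fin (n+1), a k * (Nat.descFactorial (n - k) j : ℂ) * x ^ (k:ℕ) * 0 ^ ((n - k) - j) := by
    intro x
    rw [Pmap]
    simp only [LinearMap.coe_mk, AddHom.coe_mk, map_sum, map_smul, dirD01_pow_Xp,
      map_smul, evalAt_Xp, smul_eq_mul]
    congr 1; funext k; ring
  by_cases hj : j ≤ n
  · have key2 : ∀ x : ℂ, evalAt x 0 ((dirD 0 1 ^ j) (Pmap n a)) =
        a ⟨n - j, by omega⟩ * (j.factorial : ℂ) * x ^ (n - j) := by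
      intro x
      rw [key x, Finset.sum_eq_single (⟨n - j, by omega⟩ : Fin (n+1))]
      · simp [Nat.descFactorial_self, Nat.sub_sub_self hj]
      · intro k _ hk
        have hkj : (n : ℕ) - (k:ℕ) ≠ j := by
          intro h; apply hk; ext; simp; omega
        rcases lt_or_gt_of_ne hkj with h | h
        · simp [Nat.descFactorial_eq_zero_iff_lt.2 h]
        · rw [zero_pow (by omega : (n:ℕ) - (k:ℕ) - j ≠ 0)]; ring
      · simp
    constructor
    · intro H _
      have := H 1
      rw [key2 1] at this
      simpa [Nat.factorial_ne_zero] using this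
    · intro H x
      rw [key2 x, H hj]; ring
  · constructor
    · intro _ h; exact absurd h hj
    · intro _ x
      rw [key x, Finset.sum_eq_zero]
      intro k _
      have : Nat.descFactorial (n - k) j = 0 := Nat.descFactorial_eq_zero_iff_lt.2 (by omega)
      simp [this]



/-- coefficient of the `+` mirror condition -/
noncomputable def cP (ξ : ℂ) (n k : ℕ) : ℂ :=
  ξ * k * (-ξ) ^ (n - k) + (n - k : ℕ) * (-ξ) ^ (n - k - 1)

/-- coefficient of the `-` mirror condition -/
noncomputable def cM (ξ : ℂ) (n k : ℕ) : ℂ :=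
  ξ * k * ξ ^ (n - k) - (n - k : ℕ) * ξ ^ (n - k - 1)

lemma dirD_Xp (b1 b2 : ℂ) (k s : ℕ) :
    dirD b1 b2 (Xp k s) = (b1 * k) • Xp (k-1) s + (b2 * s) • Xp k (s-1) := by
  simp [dirD, pderiv0_Xp, pderiv1_Xp, smul_smul]

lemma evalAt_dirD_Pmap (a : Fin (n+1) → ℂ) (b1 b2 t u : ℂ) :
    evalAt t u (dirD b1 b2 (Pmap n a)) =
      ∑ k : Fin (n+1), a k *
        (b1 * k * t ^ ((k:ℕ)-1) * u ^ (n-k) + b2 * ((n-(k:ℕ) : ℕ) : ℂ) * t ^ (k:ℕ) * u ^ (n-k-1)) := by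
  rw [Pmap]
  simp only [LinearMap.coe_mk, AddHom.coe_mk, map_sum, map_smul, dirD_Xp, map_add,
    evalAt_Xp, smul_eq_mul]
  congr 1; funext k; ring

lemma pow_aux1 (t : ℂ) (k n : ℕ) (hk : k ≤ n) :
    (k : ℂ) * (t ^ (k-1) * t ^ (n-k)) = k * t ^ (n-1) := by
  cases k with
  | zero => simp
  | succ k =>
    have : k + 1 - 1 + (n - (k+1)) = n - 1 := by omega
    rw [← pow_add, this]

lemma pow_aux2 (t : ℂ) (k n : ℕ) (hk : k ≤ n) :
    ((n - k : ℕ) : ℂ) * (t ^ k * t ^ (n-k-1)) = (n - k : ℕ) * t ^ (n-1) := by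
  rcases eq_or_lt_of_le hk with h | h
  · subst h; simp
  · have : k + (n - k - 1) = n - 1 := by omega
    rw [← pow_add, this]

lemma term_plus (ξ t : ℂ) (k n : ℕ) (hk : k ≤ n) :
    ξ * k * t ^ (k-1) * (-(ξ*t)) ^ (n-k) + 1 * ((n - k : ℕ) : ℂ) * t ^ k * (-(ξ*t)) ^ (n-k-1)
      = cP ξ n k * t ^ (n-1) := by
  have e : -(ξ*t) = (-ξ) * t := by ring
  rw [e, mul_pow, mul_pow, cP]
  linear_combination ξ * (-ξ)^(n-k) * pow_aux1 t k n hk + (-ξ)^(n-k-1) * pow_aux2 t k n hk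

lemma term_minus (ξ t : ℂ) (k n : ℕ) (hk : k ≤ n) :
    ξ * k * t ^ (k-1) * (ξ*t) ^ (n-k) + (-1) * ((n - k : ℕ) : ℂ) * t ^ k * (ξ*t) ^ (n-k-1)
      = cM ξ n k * t ^ (n-1) := by
  rw [mul_pow, mul_pow, cM]
  linear_combination ξ * ξ^(n-k) * pow_aux1 t k n hk - ξ^(n-k-1) * pow_aux2 t k n hk

lemma cond3_iff (ξ : ℂ) (a : Fin (n+1) → ℂ) :
    (∀ t : ℂ, evalAt t (-(ξ*t)) (dirD ξ 1 (Pmap n a)) = 0) ↔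
      ∑ k : Fin (n+1), a k * cP ξ n (k:ℕ) = 0 := by
  have key : ∀ t : ℂ, evalAt t (-(ξ*t)) (dirD ξ 1 (Pmap n a)) =
      (∑ k : Fin (n+1), a k * cP ξ n (k:ℕ)) * t ^ (n-1) := by
    intro t
    rw [evalAt_dirD_Pmap, Finset.sum_mul]
    congr 1; funext k
    linear_combination a k * term_plus ξ t k n (by omega)
  constructor
  · intro H; have := H 1; rw [key 1] at this; simpa using this
  · intro H t; rw [key t, H, zero_mul]

lemma cond4_iff (ξ : ℂ) (a : Fin (n+1) → ℂ) :
    (∀ t : ℂ, evalAt t (ξ*t) (dirD ξ (-1) (Pmap n a)) = 0) ↔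
      ∑ k : Fin (n+1), a k * cM ξ n (k:ℕ) = 0 := by
  have key : ∀ t : ℂ, evalAt t (ξ*t) (dirD ξ (-1) (Pmap n a)) =
      (∑ k : Fin (n+1), a k * cM ξ n (k:ℕ)) * t ^ (n-1) := by
    intro t
    rw [evalAt_dirD_Pmap, Finset.sum_mul]
    congr 1; funext k
    linear_combination a k * term_minus ξ t k n (by omega)
  constructor
  · intro H; have := H 1; rw [key 1] at this; simpa using this
  · intro H t; rw [key t, H, zero_mul]

/-- the exponent finsupp of the monomial `x^k y^s` -/
noncomputable def D (k s : ℕ) : Fin 2 →₀ ℕ := Finsupp.single 0 k + Finsupp.single 1 s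

lemma D_apply0 (k s : ℕ) : D k s 0 = k := by simp [D, Finsupp.single_apply]
lemma D_apply1 (k s : ℕ) : D k s 1 = s := by simp [D, Finsupp.single_apply]

lemma Xp_eq_monomial (k s : ℕ) : Xp k s = monomial (D k s) 1 := by
  rw [Xp, X_pow_eq_monomial, X_pow_eq_monomial, monomial_mul, one_mul, D]

lemma degree_eq (d : Fin 2 →₀ ℕ) : d.degree = d 0 + d 1 := by
  rw [show d.degree = ∑ i ∈ d.support, d i from rfl, Finset.sum_subset (Finset.subset_univ _)]
  · exact Fin.sum_univ_two d
  · intro x _ h; simpa using h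

lemma isHomog_Xp (k s : ℕ) : (Xp k s).IsHomogeneous (k + s) :=
  (isHomogeneous_X_pow 0 k).mul (isHomogeneous_X_pow 1 s)

lemma Pmap_mem_hom (n : ℕ) (a : Fin (n+1) → ℂ) :
    Pmap n a ∈ homogeneousSubmodule (Fin 2) ℂ n := by
  rw [Pmap]
  simp only [LinearMap.coe_mk, AddHom.coe_mk]
  apply Submodule.sum_mem
  intro k _
  apply Submodule.smul_mem
  rw [mem_homogeneousSubmodule]
  have : (k : ℕ) + (n - (k:ℕ)) = n := by omega
  simpa [this] using isHomog_Xp k (n - k)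

lemma coeff_Pmap (n : ℕ) (a : Fin (n+1) → ℂ) (k : Fin (n+1)) :
    coeff (D k (n - k)) (Pmap n a) = a k := by
  rw [Pmap]
  simp only [LinearMap.coe_mk, AddHom.coe_mk, coeff_sum, coeff_smul, Xp_eq_monomial,
    coeff_monomial, smul_eq_mul]
  rw [Finset.sum_eq_single k]
  · simp
  · intro b _ hb
    have : D b (n - b) ≠ D k (n - k) := by
      intro h
      apply hb
      have := congrArg (fun f => f 0) h
      simp only [D_apply0] at this
      exact Fin.ext this
    simp [this]
  · simp

lemma Pmap_injective (n : ℕ) : Function.Injective (Pmap n) := by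
  rw [injective_iff_map_eq_zero (Pmap n)]
  intro a ha
  funext k
  have := coeff_Pmap n a k
  rw [ha] at this
  simpa using this.symm

lemma Pmap_surj (n : ℕ) (q : MvPolynomial (Fin 2) ℂ) (hq : q.IsHomogeneous n) :
    q = Pmap n (fun k => coeff (D k (n - k)) q) := by
  apply MvPolynomial.ext
  intro d
  by_cases hd : d 0 + d 1 = n
  · have hd0 : d 0 < n + 1 := by omega
    have hD : d = D (d 0) (n - d 0) := by
      ext i
      fin_cases i
      · show d 0 = D (d 0) (n - d 0) 0
        rw [D_apply0]
      · show d 1 = D (d 0) (n - d 0) 1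
        rw [D_apply1]
        omega
    rw [hD]
    exact (coeff_Pmap n (fun k => coeff (D k (n - k)) q) ⟨d 0, hd0⟩).symm
  · rw [hq.coeff_eq_zero (by rw [degree_eq]; exact hd)]
    rw [Pmap]
    simp only [LinearMap.coe_mk, AddHom.coe_mk, coeff_sum, coeff_smul, Xp_eq_monomial,
      coeff_monomial, smul_eq_mul]
    symm
    apply Finset.sum_eq_zero
    intro k _
    have : D k (n - k) ≠ d := by
      intro h
      apply hd
      rw [← h, D_apply0, D_apply1]
      omega
    simp [this]


noncomputable def phi (N : ℕ) (c : Fin N → ℂ) : (Fin N → ℂ) →ₗ[ℂ] ℂ where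
  toFun a := ∑ k, a k * c k
  map_add' a b := by simp [add_mul, Finset.sum_add_distrib]
  map_smul' r a := by simp [Finset.mul_sum, mul_assoc]

noncomputable def Svan (N : ℕ) (P : Fin N → Prop) : Submodule ℂ (Fin N → ℂ) :=
  ⨅ k, ⨅ _ : P k, LinearMap.ker (LinearMap.proj (R := ℂ) (φ := fun _ : Fin N => ℂ) k)

lemma mem_Svan {N : ℕ} (P : Fin N → Prop) (a : Fin N → ℂ) :
    a ∈ Svan N P ↔ ∀ k, P k → a k = 0 := by
  simp [Svan, Submodule.mem_iInf, LinearMap.mem_ker]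

noncomputable def SvanEquiv (N : ℕ) (P : Fin N → Prop) [DecidablePred P] :
    (Svan N P) ≃ₗ[ℂ] ({k : Fin N // ¬ P k} → ℂ) where
  toFun a k := a.1 k.1
  map_add' a b := rfl
  map_smul' r a := rfl
  invFun g := ⟨fun k => if h : P k then 0 else g ⟨k, h⟩, by
    rw [mem_Svan]; intro k hk; simp [hk]⟩
  left_inv a := Subtype.ext (funext fun k => by
    by_cases h : P k
    · simp [h, ((mem_Svan P a.1).1 a.2 k h).symm]
    · simp [h])
  right_inv g := funext fun k => by simp [k.2]

lemma finrank_Svan (N : ℕ) (P : Fin N → Prop) [DecidablePred P] :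
    finrank ℂ (Svan N P) = (Finset.univ.filter (fun k => ¬ P k)).card := by
  rw [(SvanEquiv N P).finrank_eq, Module.finrank_pi, Fintype.card_subtype]

lemma phi_single {N : ℕ} (c : Fin N → ℂ) (k : Fin N) :
    phi N c (Pi.single k 1) = c k := by
  rw [phi]
  simp only [LinearMap.coe_mk, AddHom.coe_mk]
  rw [Finset.sum_eq_single k]
  · simp
  · intro b _ hb; simp [Pi.single_eq_of_ne hb]
  · simp

lemma dim_PK (N : ℕ) (P : Fin N → Prop) [DecidablePred P] (c : Fin N → ℂ) :
    finrank ℂ ((Svan N P ⊓ LinearMap.ker (phi N c)) : Submodule ℂ (Fin N → ℂ)) =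
      (Finset.univ.filter (fun k => ¬ P k)).card -
        (if ∃ k, ¬ P k ∧ c k ≠ 0 then 1 else 0) := by
  set ψ := (phi N c).comp (Svan N P).subtype with hψ
  have hker : Submodule.map (Svan N P).subtype (LinearMap.ker ψ) =
      Svan N P ⊓ LinearMap.ker (phi N c) := by
    rw [hψ, LinearMap.ker_comp, Submodule.map_comap_subtype]
  have h1 : finrank ℂ (LinearMap.ker ψ) =
      finrank ℂ ((Svan N P ⊓ LinearMap.ker (phi N c)) : Submodule ℂ (Fin N → ℂ)) := by
    rw [← hker]
    exact (Submodule.equivMapOfInjective _ (Submodule.injective_subtype _) _).finrank_eq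
  have hrn := LinearMap.finrank_range_add_finrank_ker ψ
  rw [finrank_Svan N P] at hrn
  by_cases hE : ∃ k, ¬ P k ∧ c k ≠ 0
  · obtain ⟨k, hk, hck⟩ := hE
    have hcard : 0 < (Finset.univ.filter (fun k => ¬ P k)).card :=
      Finset.card_pos.2 ⟨k, by simp [hk]⟩
    have hle : finrank ℂ (LinearMap.range ψ) ≤ 1 := by
      have := Submodule.finrank_le (LinearMap.range ψ)
      rwa [Module.finrank_self] at this
    have hpos : 0 < finrank ℂ (LinearMap.range ψ) := by
      rw [Module.finrank_pos_iff_exists_ne_zero]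
      have hmem : Pi.single k 1 ∈ Svan N P := by
        rw [mem_Svan]
        intro j hj
        have : j ≠ k := fun h => hk (h ▸ hj)
        simp [Pi.single_eq_of_ne this]
      refine ⟨⟨ψ ⟨Pi.single k 1, hmem⟩, LinearMap.mem_range_self _ _⟩, ?_⟩
      intro h0
      apply hck
      have : ψ ⟨Pi.single k 1, hmem⟩ = 0 := by
        simpa using congrArg Subtype.val h0
      rwa [hψ, LinearMap.comp_apply, Submodule.subtype_apply, phi_single] at this
    have hr1 : finrank ℂ (LinearMap.range ψ) = 1 := by omega
    rw [hr1] at hrn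
    simp only [if_pos (⟨k, hk, hck⟩ : ∃ k, ¬ P k ∧ c k ≠ 0)]
    omega
  · have hz : ψ = 0 := by
      ext a
      rw [hψ, LinearMap.comp_apply, Submodule.subtype_apply, phi]
      simp only [LinearMap.coe_mk, AddHom.coe_mk, LinearMap.zero_apply]
      apply Finset.sum_eq_zero
      intro j _
      by_cases hj : P j
      · rw [(mem_Svan P a.1).1 a.2 j hj, zero_mul]
      · have : c j = 0 := by
          by_contra hc
          exact hE ⟨j, hj, hc⟩
        rw [this, mul_zero]
    have : LinearMap.ker ψ = ⊤ := by rw [hz]; exact LinearMap.ker_zero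
    rw [this] at h1
    rw [if_neg hE, Nat.sub_zero, ← h1]
    rw [finrank_top]
    rw [finrank_Svan N P]
/-- the kill predicate -/
def Kill (m l n : ℕ) (k : ℕ) : Prop := k % 2 = 1 ∧ (k ≤ 2*m - 1 ∨ n < k + 2*l + 1)

noncomputable def V (m l : ℕ) (ξ : ℂ) (n : ℕ) : Submodule ℂ (Fin (n+1) → ℂ) :=
  (⨅ k : Fin (n+1), ⨅ _ : Kill m l n (k:ℕ),
      LinearMap.ker (LinearMap.proj (R := ℂ) (φ := fun _ : Fin (n+1) => ℂ) k)) ⊓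
    LinearMap.ker (phi (n+1) (fun k => cP ξ n (k:ℕ))) ⊓
    LinearMap.ker (phi (n+1) (fun k => cM ξ n (k:ℕ)))

lemma mem_V_iff (m l : ℕ) (ξ : ℂ) (n : ℕ) (a : Fin (n+1) → ℂ) :
    a ∈ V m l ξ n ↔
      (∀ k : Fin (n+1), Kill m l n (k:ℕ) → a k = 0) ∧
      (∑ k : Fin (n+1), a k * cP ξ n (k:ℕ) = 0) ∧
      (∑ k : Fin (n+1), a k * cM ξ n (k:ℕ) = 0) := by
  simp [V, Submodule.mem_inf, Submodule.mem_iInf, LinearMap.mem_ker, phi, and_assoc]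

lemma Pmap_mem_quasiC_iff (m l n : ℕ) (ξ : ℂ) (hm : 1 ≤ m) (hl : 1 ≤ l) (hn : n % 2 = 0)
    (a : Fin (n+1) → ℂ) :
    Pmap n a ∈ quasiC m l ξ ↔ a ∈ V m l ξ n := by
  rw [quasiC, mem_V_iff]
  simp only [Submodule.mem_inf, Submodule.mem_iInf, LinearMap.mem_ker, LinearMap.comp_apply]
  constructor
  · rintro ⟨⟨⟨h1, h2⟩, h3⟩, h4⟩
    refine ⟨?_, (cond3_iff n ξ a).1 h3, (cond4_iff n ξ a).1 h4⟩
    rintro k ⟨hk1, hk2⟩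
    rcases hk2 with hk2 | hk2
    · set r := ((k:ℕ)+1)/2 with hr
      have hrm : r ∈ Finset.Icc 1 m := by rw [Finset.mem_Icc]; omega
      have := (cond1_iff n a (2*r-1)).1 (h1 r hrm) (by omega)
      rwa [show (⟨2*r-1, by omega⟩ : Fin (n+1)) = k from Fin.ext (by simp; omega)] at this
    · have hkn : (k:ℕ) ≤ n := by omega
      have hkn' : (k:ℕ) < n := by omega
      set r := ((n-(k:ℕ))+1)/2 with hr
      have hrl : r ∈ Finset.Icc 1 l := by rw [Finset.mem_Icc]; omega
      have := (cond2_iff n a (2*r-1)).1 (h2 r hrl) (by omega)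
      rwa [show (⟨n - (2*r-1), by omega⟩ : Fin (n+1)) = k from Fin.ext (by simp; omega)] at this
  · rintro ⟨hK, h3, h4⟩
    refine ⟨⟨⟨?_, ?_⟩, (cond3_iff n ξ a).2 h3⟩, (cond4_iff n ξ a).2 h4⟩
    · intro r hr
      rw [Finset.mem_Icc] at hr
      refine (cond1_iff n a (2*r-1)).2 ?_
      intro h
      exact hK ⟨2*r-1, h⟩ ⟨by simp; omega, Or.inl (by simp; omega)⟩
    · intro r hr
      rw [Finset.mem_Icc] at hr
      refine (cond2_iff n a (2*r-1)).2 ?_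
      intro h
      exact hK ⟨n-(2*r-1), by omega⟩ ⟨by simp; omega, Or.inr (by simp; omega)⟩


instance (m l n k : ℕ) : Decidable (Kill m l n k) := by unfold Kill; infer_instance

lemma phi_apply (N : ℕ) (c a : Fin N → ℂ) : phi N c a = ∑ k, a k * c k := rfl

noncomputable def cMf (ξ : ℂ) (n : ℕ) : Fin (n+1) → ℂ := fun k => cM ξ n (k:ℕ)

noncomputable def Ve (ξ : ℂ) (n : ℕ) : Submodule ℂ (Fin (n+1) → ℂ) :=
  Svan (n+1) (fun k => (k:ℕ) % 2 = 1) ⊓ LinearMap.ker (phi (n+1) (cMf ξ n))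

noncomputable def Vo (m l : ℕ) (ξ : ℂ) (n : ℕ) : Submodule ℂ (Fin (n+1) → ℂ) :=
  Svan (n+1) (fun k => (k:ℕ) % 2 = 0 ∨ Kill m l n (k:ℕ)) ⊓
    LinearMap.ker (phi (n+1) (cMf ξ n))

lemma cP_eq_cM (ξ : ℂ) (n k : ℕ) (hn : n % 2 = 0) (hk : k ≤ n) :
    cP ξ n k = (-1)^k * cM ξ n k := by
  rcases eq_or_lt_of_le hk with h | h
  · rw [h, cP, cM, Nat.sub_self]
    simp [Even.neg_one_pow (Nat.even_iff.mpr hn)]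
  · have h1 : (-1:ℂ)^(n-k) = (-1)^k := by
      rcases Nat.even_or_odd k with he | ho
      · rw [Even.neg_one_pow (by rw [Nat.even_iff] at he ⊢; omega), Even.neg_one_pow he]
      · rw [Odd.neg_one_pow (by rw [Nat.odd_iff] at ho ⊢; omega), Odd.neg_one_pow ho]
    have h2 : (-1:ℂ)^(n-k-1) = -(-1)^k := by
      rcases Nat.even_or_odd k with he | ho
      · rw [Odd.neg_one_pow (by rw [Nat.even_iff] at he; rw [Nat.odd_iff]; omega),
          Even.neg_one_pow he]
      · rw [Even.neg_one_pow (by rw [Nat.odd_iff] at ho; rw [Nat.even_iff]; omega),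
          Odd.neg_one_pow ho]
        norm_num
    have e1 : (-ξ)^(n-k) = (-1:ℂ)^k * ξ^(n-k) := by rw [neg_pow, h1]
    have e2 : (-ξ)^(n-k-1) = -((-1:ℂ)^k * ξ^(n-k-1)) := by rw [neg_pow, h2]; ring
    rw [cP, cM, e1, e2]
    ring

lemma sum_cP_split (ξ : ℂ) (hn : n % 2 = 0) (a : Fin (n+1) → ℂ) :
    ∑ k : Fin (n+1), a k * cP ξ n (k:ℕ) =
      (∑ k : Fin (n+1), (if (k:ℕ)%2 = 0 then a k else 0) * cM ξ n (k:ℕ))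
      - (∑ k : Fin (n+1), (if (k:ℕ)%2 = 0 then 0 else a k) * cM ξ n (k:ℕ)) := by
  rw [← Finset.sum_sub_distrib]
  apply Finset.sum_congr rfl
  intro k _
  rw [cP_eq_cM ξ n k hn (by omega)]
  by_cases h : (k:ℕ)%2 = 0
  · rw [if_pos h, if_pos h, Even.neg_one_pow (Nat.even_iff.mpr h)]; ring
  · rw [if_neg h, if_neg h, Odd.neg_one_pow (Nat.odd_iff.mpr (by omega))]; ring

lemma V_eq (m l : ℕ) (ξ : ℂ) (hn : n % 2 = 0) :
    V m l ξ n = Ve ξ n ⊔ Vo m l ξ n := by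
  apply le_antisymm
  · intro a ha
    rw [mem_V_iff] at ha
    obtain ⟨hK, h3, h4⟩ := ha
    set ae : Fin (n+1) → ℂ := fun k => if (k:ℕ)%2 = 0 then a k else 0 with hae
    set ao : Fin (n+1) → ℂ := fun k => if (k:ℕ)%2 = 0 then 0 else a k with hao
    have e4 : ∑ k : Fin (n+1), a k * cM ξ n (k:ℕ) =
        (∑ k : Fin (n+1), ae k * cM ξ n (k:ℕ)) + ∑ k : Fin (n+1), ao k * cM ξ n (k:ℕ) := by
      rw [← Finset.sum_add_distrib]
      apply Finset.sum_congr rfl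
      intro k _
      by_cases h : (k:ℕ)%2 = 0
      · simp [hae, hao, h]
      · simp [hae, hao, h]
    rw [sum_cP_split n ξ hn a] at h3
    rw [e4] at h4
    have hSe : ∑ k : Fin (n+1), ae k * cM ξ n (k:ℕ) = 0 := by linear_combination (h3 + h4)/2
    have hSo : ∑ k : Fin (n+1), ao k * cM ξ n (k:ℕ) = 0 := by linear_combination (h4 - h3)/2
    have hmem_e : ae ∈ Ve ξ n := by
      refine ⟨(mem_Svan _ _).2 ?_, LinearMap.mem_ker.2 ?_⟩
      · intro k hk
        have hne : ¬ ((k:ℕ)%2 = 0) := by omega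
        simp [hae, hne]
      · rw [phi_apply]; exact hSe
    have hmem_o : ao ∈ Vo m l ξ n := by
      refine ⟨(mem_Svan _ _).2 ?_, LinearMap.mem_ker.2 ?_⟩
      · intro k hk
        rcases hk with hk | hk
        · simp [hao, hk]
        · have hodd : (k:ℕ)%2 = 1 := hk.1
          simp only [hao, if_neg (by omega : ¬ ((k:ℕ)%2 = 0))]
          exact hK k hk
      · rw [phi_apply]; exact hSo
    have haeo : a = ae + ao := by
      funext k
      by_cases h : (k:ℕ)%2 = 0 <;> simp [hae, hao, h]
    rw [haeo]
    exact Submodule.add_mem_sup hmem_e hmem_o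
  · apply sup_le
    · intro a ha
      have hvan := (mem_Svan _ a).1 ha.1
      have h4 : ∑ k : Fin (n+1), a k * cM ξ n (k:ℕ) = 0 := LinearMap.mem_ker.1 ha.2
      rw [mem_V_iff]
      refine ⟨fun k hk => hvan k hk.1, ?_, h4⟩
      rw [sum_cP_split n ξ hn a]
      have e1 : ∑ k : Fin (n+1), (if (k:ℕ)%2 = 0 then a k else 0) * cM ξ n (k:ℕ) =
          ∑ k : Fin (n+1), a k * cM ξ n (k:ℕ) := by
        apply Finset.sum_congr rfl
        intro k _
        by_cases h : (k:ℕ)%2 = 0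
        · rw [if_pos h]
        · rw [if_neg h, hvan k (by omega)]
      have e2 : ∑ k : Fin (n+1), (if (k:ℕ)%2 = 0 then 0 else a k) * cM ξ n (k:ℕ) = 0 := by
        apply Finset.sum_eq_zero
        intro k _
        by_cases h : (k:ℕ)%2 = 0
        · rw [if_pos h, zero_mul]
        · rw [if_neg h, hvan k (by omega), zero_mul]
      rw [e1, e2, h4, sub_zero]
    · intro a ha
      have hvan := (mem_Svan _ a).1 ha.1
      have h4 : ∑ k : Fin (n+1), a k * cM ξ n (k:ℕ) = 0 := LinearMap.mem_ker.1 ha.2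
      rw [mem_V_iff]
      refine ⟨fun k hk => hvan k (Or.inr hk), ?_, h4⟩
      rw [sum_cP_split n ξ hn a]
      have e1 : ∑ k : Fin (n+1), (if (k:ℕ)%2 = 0 then a k else 0) * cM ξ n (k:ℕ) = 0 := by
        apply Finset.sum_eq_zero
        intro k _
        by_cases h : (k:ℕ)%2 = 0
        · rw [if_pos h, hvan k (Or.inl h), zero_mul]
        · rw [if_neg h, zero_mul]
      have e2 : ∑ k : Fin (n+1), (if (k:ℕ)%2 = 0 then 0 else a k) * cM ξ n (k:ℕ) =
          ∑ k : Fin (n+1), a k * cM ξ n (k:ℕ) := by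
        apply Finset.sum_congr rfl
        intro k _
        by_cases h : (k:ℕ)%2 = 0
        · rw [if_pos h, hvan k (Or.inl h), zero_mul]
        · rw [if_neg h]
      rw [e1, e2, h4, zero_sub, neg_zero]

lemma Ve_inf_Vo (m l : ℕ) (ξ : ℂ) : Ve ξ n ⊓ Vo m l ξ n = ⊥ := by
  rw [eq_bot_iff]
  rintro a ⟨h1, h2⟩
  rw [Submodule.mem_bot]
  funext k
  by_cases h : (k:ℕ)%2 = 0
  · exact (mem_Svan _ a).1 h2.1 k (Or.inl h)
  · exact (mem_Svan _ a).1 h1.1 k (by omega)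

lemma finrank_V (m l : ℕ) (ξ : ℂ) (hn : n % 2 = 0) :
    finrank ℂ (V m l ξ n) = finrank ℂ (Ve ξ n) + finrank ℂ (Vo m l ξ n) := by
  rw [V_eq n m l ξ hn]
  have h := Submodule.finrank_sup_add_finrank_inf_eq (Ve ξ n) (Vo m l ξ n)
  rw [Ve_inf_Vo, finrank_bot] at h
  omega

lemma cM_zero_iff (m l n k : ℕ) (ξ : ℂ)
    (hξ : ξ ^ 2 = (2 * (l : ℂ) + 1) / (2 * (m : ℂ) + 1)) (hk : k ≤ n) :
    cM ξ n k = 0 ↔ (2*l+1)*k = (2*m+1)*(n-k) := by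
  have hm2 : (2*(m:ℂ)+1) ≠ 0 := by
    have : ((2*m+1 : ℕ) : ℂ) ≠ 0 := Nat.cast_ne_zero.mpr (by omega)
    push_cast at this
    convert this using 2
  have hl2 : (2*(l:ℂ)+1) ≠ 0 := by
    have : ((2*l+1 : ℕ) : ℂ) ≠ 0 := Nat.cast_ne_zero.mpr (by omega)
    push_cast at this
    convert this using 2
  have hξ0 : ξ ≠ 0 := by
    intro h0
    rw [h0] at hξ
    apply hl2
    field_simp at hξ
    simpa using hξ.symm
  rcases eq_or_lt_of_le hk with h | h
  · have e : cM ξ n n = ξ * n := by rw [cM, Nat.sub_self]; simp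
    rw [h, e, Nat.sub_self, mul_zero]
    constructor
    · intro h0
      rcases mul_eq_zero.1 h0 with h0 | h0
      · exact absurd h0 hξ0
      · have hn0 : n = 0 := by exact_mod_cast h0
        rw [hn0, mul_zero]
    · intro hh
      have hn0 : n = 0 := by
        rcases Nat.mul_eq_zero.1 hh with h' | h'
        · omega
        · exact h'
      rw [hn0]
      simp
  · have e : cM ξ n k = ξ^(n-k-1) * (ξ^2 * k - ((n-k : ℕ) : ℂ)) := by
      rw [cM]
      have hnk : n - k = (n - k - 1) + 1 := by omega
      rw [hnk, pow_succ]
      have hnk2 : n - k - 1 + 1 - 1 = n - k - 1 := by omega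
      rw [hnk2]
      push_cast
      ring
    have hcast : ((n - k : ℕ) : ℂ) = (n : ℂ) - k := by
      push_cast [Nat.cast_sub (le_of_lt h)]
      ring
    rw [e, hξ]
    constructor
    · intro h0
      rcases mul_eq_zero.1 h0 with h0 | h0
      · exact absurd h0 (pow_ne_zero _ hξ0)
      · rw [hcast] at h0
        have key : (2*(l:ℂ)+1) * k = (2*(m:ℂ)+1) * ((n:ℂ) - k) := by
          have h1 : (2*(l:ℂ)+1)/(2*(m:ℂ)+1) * k = (n:ℂ) - k := by linear_combination h0
          field_simp at h1
          linear_combination h1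
        have : (((2*l+1) * k : ℕ) : ℂ) = (((2*m+1) * (n-k) : ℕ) : ℂ) := by
          push_cast [Nat.cast_sub (le_of_lt h)]
          linear_combination key
        exact_mod_cast this
    · intro hh
      apply mul_eq_zero.2
      right
      have key : (((2*l+1) * k : ℕ) : ℂ) = (((2*m+1) * (n-k) : ℕ) : ℂ) := by
        exact_mod_cast congrArg (Nat.cast : ℕ → ℂ) hh
      push_cast [Nat.cast_sub (le_of_lt h)] at key
      rw [hcast]
      field_simp
      linear_combination key

lemma card_evens (n : ℕ) (hn : n % 2 = 0) :
    (Finset.univ.filter (fun k : Fin (n+1) => ¬ ((k:ℕ)%2 = 1))).card = n/2 + 1 := by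
  have step1 : (Finset.univ.filter (fun k : Fin (n+1) => ¬ ((k:ℕ)%2 = 1))).card =
      ((Finset.range (n+1)).filter (fun k => ¬ (k%2 = 1))).card := by
    rw [Finset.card_filter, Finset.card_filter]
    exact Fin.sum_univ_eq_sum_range (fun k => if ¬ (k%2 = 1) then 1 else 0) (n+1)
  rw [step1]
  have himg : (Finset.range (n+1)).filter (fun k => ¬ (k%2 = 1)) =
      (Finset.range (n/2+1)).image (fun i => 2*i) := by
    ext k
    simp only [Finset.mem_filter, Finset.mem_range, Finset.mem_image]
    constructor
    · rintro ⟨hk1, hk2⟩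
      exact ⟨k/2, by omega, by omega⟩
    · rintro ⟨i, hi, rfl⟩
      omega
  rw [himg, Finset.card_image_of_injective _ (fun a b hab => by omega), Finset.card_range]

lemma free_char (m l n : ℕ) (k : ℕ) :
    (¬ (k%2 = 0 ∨ Kill m l n k)) ↔ (k%2 = 1 ∧ 2*m+1 ≤ k ∧ k + 2*l+1 ≤ n) := by
  unfold Kill
  omega

lemma card_free (m l n : ℕ) (hn : n % 2 = 0) :
    (Finset.univ.filter
      (fun k : Fin (n+1) => ¬ ((k:ℕ)%2 = 0 ∨ Kill m l n (k:ℕ)))).card = n/2 - m - l := by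
  have step1 : (Finset.univ.filter (fun k : Fin (n+1) => ¬ ((k:ℕ)%2 = 0 ∨ Kill m l n (k:ℕ)))).card
      = ((Finset.range (n+1)).filter (fun k => ¬ (k%2 = 0 ∨ Kill m l n k))).card := by
    rw [Finset.card_filter, Finset.card_filter]
    exact Fin.sum_univ_eq_sum_range (fun k => if ¬ (k%2 = 0 ∨ Kill m l n k) then 1 else 0) (n+1)
  rw [step1]
  have himg : (Finset.range (n+1)).filter (fun k => ¬ (k%2 = 0 ∨ Kill m l n k)) =
      (Finset.range (n/2 - m - l)).image (fun i => 2*m+1+2*i) := by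
    ext k
    simp only [Finset.mem_filter, Finset.mem_range, Finset.mem_image, free_char]
    constructor
    · rintro ⟨hk1, hk2, hk3, hk4⟩
      exact ⟨(k-2*m-1)/2, by omega, by omega⟩
    · rintro ⟨i, hi, rfl⟩
      omega
  rw [himg, Finset.card_image_of_injective _ (fun a b hab => by omega), Finset.card_range]

lemma finrank_Ve (m l n : ℕ) (ξ : ℂ) (hm : 1 ≤ m) (hl : 1 ≤ l)
    (hξ : ξ ^ 2 = (2 * (l : ℂ) + 1) / (2 * (m : ℂ) + 1)) (hn : n % 2 = 0) :
    finrank ℂ (Ve ξ n) = if n = 0 then 1 else n/2 := by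
  rw [Ve, dim_PK, card_evens n hn]
  by_cases h0 : n = 0
  · rw [if_pos h0]
    have hno : ¬ ∃ k : Fin (n+1), ¬ ((k:ℕ)%2 = 1) ∧ cMf ξ n k ≠ 0 := by
      rintro ⟨k, -, hck⟩
      apply hck
      show cM ξ n (k:ℕ) = 0
      have hkn : (k:ℕ) = 0 := by omega
      rw [hkn, cM_zero_iff m l n 0 ξ hξ (by omega), mul_zero, h0]
      simp
    rw [if_neg hno]
    clear hno
    omega
  · rw [if_neg h0]
    have hyes : ∃ k : Fin (n+1), ¬ ((k:ℕ)%2 = 1) ∧ cMf ξ n k ≠ 0 := by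
      refine ⟨⟨0, by omega⟩, by simp, ?_⟩
      show cM ξ n ((0:ℕ)) ≠ 0
      rw [Ne, cM_zero_iff m l n 0 ξ hξ (by omega), mul_zero, Nat.sub_zero]
      intro hcon
      rcases Nat.mul_eq_zero.1 hcon.symm with h' | h' <;> omega
    rw [if_pos hyes]
    clear hyes
    omega

lemma finrank_Vo (m l n : ℕ) (ξ : ℂ) (hm : 1 ≤ m) (hl : 1 ≤ l)
    (hξ : ξ ^ 2 = (2 * (l : ℂ) + 1) / (2 * (m : ℂ) + 1)) (hn : n % 2 = 0) :
    finrank ℂ (Vo m l ξ n) =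
      (if n < 2 * (m + l + 1) then 0
       else if n = 2 * (m + l + 1) then 1
       else n / 2 - m - l - 1) := by
  rw [Vo, dim_PK, card_free m l n hn]
  rcases lt_trichotomy n (2 * (m + l + 1)) with hcase | hcase | hcase
  · rw [if_pos hcase]
    have hno : ¬ ∃ k : Fin (n+1), ¬ ((k:ℕ)%2 = 0 ∨ Kill m l n (k:ℕ)) ∧ cMf ξ n k ≠ 0 := by
      rintro ⟨k, hk, -⟩
      rw [free_char] at hk
      omega
    rw [if_neg hno]
    clear hno
    omega
  · rw [if_neg (show ¬ n < 2*(m+l+1) from by omega), if_pos hcase]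
    have hno : ¬ ∃ k : Fin (n+1), ¬ ((k:ℕ)%2 = 0 ∨ Kill m l n (k:ℕ)) ∧ cMf ξ n k ≠ 0 := by
      rintro ⟨k, hk, hck⟩
      rw [free_char] at hk
      apply hck
      show cM ξ n (k:ℕ) = 0
      have hkval : (k:ℕ) = 2*m+1 := by omega
      rw [hkval, cM_zero_iff m l n (2*m+1) ξ hξ (by omega), hcase,
        show 2*(m+l+1) - (2*m+1) = 2*l+1 from by omega]
      ring
    rw [if_neg hno]
    clear hno
    omega
  · rw [if_neg (show ¬ n < 2*(m+l+1) from by omega),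
      if_neg (show ¬ n = 2*(m+l+1) from by omega)]
    have hyes : ∃ k : Fin (n+1), ¬ ((k:ℕ)%2 = 0 ∨ Kill m l n (k:ℕ)) ∧ cMf ξ n k ≠ 0 := by
      refine ⟨⟨2*m+1, by omega⟩, ?_, ?_⟩
      · rw [free_char]
        show (2*m+1)%2 = 1 ∧ 2*m+1 ≤ 2*m+1 ∧ (2*m+1)+2*l+1 ≤ n
        omega
      · show cM ξ n (2*m+1) ≠ 0
        rw [Ne, cM_zero_iff m l n (2*m+1) ξ hξ (by omega)]
        intro hcon
        rw [mul_comm] at hcon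
        have := Nat.eq_of_mul_eq_mul_left (show 0 < 2*m+1 from by omega) hcon
        omega
    rw [if_pos hyes]
end QC

/-- For even `n`, the dimension of the space of all homogeneous quasi-invariants of degree `n`
for `C₂(m,l)` equals `(n = 0 ? 1 : n/2)` plus `(0 if n < 2(m+l+1), 1 if n = 2(m+l+1),
n/2 - m - l - 1 if n > 2(m+l+1))`. -/
theorem quasiC_even_degree_dimension (m l : ℕ) (hm : 1 ≤ m) (hl : 1 ≤ l) (ξ : ℂ)
    (hξ : ξ ^ 2 = (2 * (l : ℂ) + 1) / (2 * (m : ℂ) + 1)) (n : ℕ) (hn : Even n) :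
    Module.finrank ℂ
        ↥(MvPolynomial.homogeneousSubmodule (Fin 2) ℂ n ⊓ quasiC m l ξ) =
      (if n = 0 then 1 else n / 2) +
      (if n < 2 * (m + l + 1) then 0
       else if n = 2 * (m + l + 1) then 1
       else n / 2 - m - l - 1) := by
  have hn2 : n % 2 = 0 := Nat.even_iff.1 hn
  have hmain : MvPolynomial.homogeneousSubmodule (Fin 2) ℂ n ⊓ quasiC m l ξ =
      Submodule.map (QC.Pmap n) (QC.V m l ξ n) := by
    apply le_antisymm
    · intro q hq
      rw [Submodule.mem_inf] at hq
      obtain ⟨hq1, hq2⟩ := hq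
      rw [MvPolynomial.mem_homogeneousSubmodule] at hq1
      rw [Submodule.mem_map]
      refine ⟨fun k => MvPolynomial.coeff (QC.D k (n-k)) q, ?_, (QC.Pmap_surj n q hq1).symm⟩
      rw [← QC.Pmap_mem_quasiC_iff m l n ξ hm hl hn2, ← QC.Pmap_surj n q hq1]
      exact hq2
    · intro q hq
      rw [Submodule.mem_map] at hq
      obtain ⟨a, ha, rfl⟩ := hq
      rw [Submodule.mem_inf]
      exact ⟨QC.Pmap_mem_hom n a, (QC.Pmap_mem_quasiC_iff m l n ξ hm hl hn2 a).2 ha⟩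
  rw [hmain,
    ← (Submodule.equivMapOfInjective _ (QC.Pmap_injective n) (QC.V m l ξ n)).finrank_eq,
    QC.finrank_V n m l ξ hn2, QC.finrank_Ve m l n ξ hm hl hξ hn2,
    QC.finrank_Vo m l n ξ hm hl hξ hn2]
end

section
/- For A_n(m) with m a positive integer (hence outside the exceptional set), the quotient ℂ[x₁,...,x_{n+1}]/(p₁,...,p_{n+1}) is finite-dimensional, where pₛ = x₁^s + ... + xₙ^s + m^{(s−2)/2} x_{n+1}^s; equivalently, the radical of the ideal (p₁,...,p_{n+1}) is the maximal ideal (x₁,...,x_{n+1}). -/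
open MvPolynomial

open Finset Matrix in

/-- Distinct nonzero complex numbers with positive integer weights whose weighted power
sums `s = 1, ..., card` all vanish form the empty set. -/
lemma weighted_newton_empty (S : Finset ℂ) (w : ℂ → ℕ) (hw : ∀ a ∈ S, 0 < w a)
    (h0 : (0 : ℂ) ∉ S)
    (hs : ∀ s : ℕ, 1 ≤ s → s ≤ S.card → ∑ a ∈ S, (w a : ℂ) * a ^ s = 0) :
    S = ∅ := by
  set k := S.card with hk
  set e : Fin k → ℂ := fun i => ((S.equivFin.symm i : S) : ℂ) with he
  have he_mem : ∀ i, e i ∈ S := fun i => (S.equivFin.symm i).2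
  have he_inj : Function.Injective e :=
    Subtype.coe_injective.comp S.equivFin.symm.injective
  set A : Matrix (Fin k) (Fin k) ℂ := fun t i => e i ^ ((t : ℕ) + 1) with hA
  have hdet : A.det ≠ 0 := by
    have hfac : A = (Matrix.vandermonde e)ᵀ * Matrix.diagonal e := by
      ext t i
      simp [hA, Matrix.mul_apply, Matrix.diagonal, Matrix.vandermonde, pow_succ,
        Finset.sum_ite_eq', mul_comm]
    rw [hfac, Matrix.det_mul, Matrix.det_transpose, Matrix.det_diagonal]
    refine mul_ne_zero (Matrix.det_vandermonde_ne_zero_iff.mpr he_inj) ?_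
    exact Finset.prod_ne_zero_iff.mpr fun i _ => fun h => h0 (h ▸ he_mem i)
  have hmul : A.mulVec (fun i => (w (e i) : ℂ)) = 0 := by
    funext t
    have : ∑ a ∈ S, (w a : ℂ) * a ^ ((t : ℕ) + 1) = 0 :=
      hs _ (Nat.le_add_left 1 t) (by omega)
    simp only [Pi.zero_apply]
    rw [← this]
    rw [Matrix.mulVec, dotProduct]
    rw [← Finset.sum_coe_sort S (fun a => (w a : ℂ) * a ^ ((t : ℕ) + 1))]
    exact Fintype.sum_equiv S.equivFin.symm _ _ fun i => by simp [hA, he, mul_comm]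
  have hzero := Matrix.eq_zero_of_mulVec_eq_zero hdet hmul
  by_contra hne
  obtain ⟨a, ha⟩ := Finset.nonempty_iff_ne_empty.mpr hne
  have hk0 : 0 < k := Finset.card_pos.mpr ⟨a, ha⟩
  have := congrFun hzero ⟨0, hk0⟩
  simp only [Pi.zero_apply, Nat.cast_eq_zero] at this
  exact (hw _ (he_mem ⟨0, hk0⟩)).ne' this

lemma weighted_newton_all_zero (S : Finset ℂ) (w : ℂ → ℕ) (hw : ∀ a ∈ S, 0 < w a)
    (hs : ∀ s : ℕ, 1 ≤ s → s ≤ S.card → ∑ a ∈ S, (w a : ℂ) * a ^ s = 0) :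
    ∀ a ∈ S, a = 0 := by
  have hT : S.erase 0 = ∅ := by
    refine weighted_newton_empty (S.erase 0) w (fun a ha => hw a (Finset.mem_of_mem_erase ha))
      (Finset.notMem_erase _ _) fun s hs1 hs2 => ?_
    have hsum : ∑ a ∈ S.erase 0, (w a : ℂ) * a ^ s = ∑ a ∈ S, (w a : ℂ) * a ^ s := by
      rcases Finset.decidableMem (0 : ℂ) S with h | h
      · rw [Finset.erase_eq_of_notMem h]
      · rw [← Finset.sum_erase_add S _ h, zero_pow (by omega), mul_zero, add_zero]
    rw [hsum]
    exact hs s hs1 (hs2.trans (Finset.card_erase_le))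
  intro a ha
  by_contra hne
  have : a ∈ S.erase 0 := Finset.mem_erase.mpr ⟨hne, ha⟩
  simp [hT] at this

lemma weighted_newton_fin {N : ℕ} (c : Fin N → ℕ) (hc : ∀ i, 0 < c i) (v : Fin N → ℂ)
    (hs : ∀ s : ℕ, 1 ≤ s → s ≤ N → ∑ i, (c i : ℂ) * v i ^ s = 0) :
    ∀ i, v i = 0 := by
  classical
  set S : Finset ℂ := Finset.image v Finset.univ with hS
  set w : ℂ → ℕ := fun a => ∑ i ∈ Finset.univ.filter (fun i => v i = a), c i with hwdef
  have key : ∀ a ∈ S, a = 0 := by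
    refine weighted_newton_all_zero S w ?_ ?_
    · intro a ha
      obtain ⟨i, _, hi⟩ := Finset.mem_image.mp ha
      refine Finset.sum_pos' (fun _ _ => Nat.zero_le _) ⟨i, ?_, hc i⟩
      exact Finset.mem_filter.mpr ⟨Finset.mem_univ _, hi⟩
    · intro s hs1 hs2
      have hcard : S.card ≤ N := le_trans Finset.card_image_le (by simp)
      have := hs s hs1 (hs2.trans hcard)
      rw [← this]
      rw [← Finset.sum_fiberwise_of_maps_to (fun i _ => Finset.mem_image_of_mem v
        (Finset.mem_univ i)) (fun i => (c i : ℂ) * v i ^ s)]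
      refine Finset.sum_congr rfl fun a _ => ?_
      rw [hwdef, Nat.cast_sum, Finset.sum_mul]
      refine Finset.sum_congr rfl fun i hi => ?_
      rw [(Finset.mem_filter.mp hi).2]
  exact fun i => key (v i) (Finset.mem_image_of_mem v (Finset.mem_univ i))

lemma mem_span_range_X_of_constantCoeff_eq_zero {N : ℕ} {p : MvPolynomial (Fin N) ℂ}
    (h : constantCoeff p = 0) :
    p ∈ Ideal.span (Set.range (X : Fin N → MvPolynomial (Fin N) ℂ)) := by
  rw [MvPolynomial.as_sum p]
  refine Ideal.sum_mem _ fun d hd => ?_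
  by_cases hd0 : d = 0
  · subst hd0
    have : coeff 0 p = 0 := h
    simp [this]
  · obtain ⟨i, hi⟩ : ∃ i, d i ≠ 0 := by
      by_contra hcon
      push_neg at hcon
      exact hd0 (Finsupp.ext hcon)
    obtain ⟨q, hq⟩ := (X_dvd_monomial (i := i) (j := d) (r := coeff d p)).mpr (Or.inr hi)
    rw [hq]
    exact Ideal.mul_mem_right _ _ (Ideal.subset_span (Set.mem_range_self i))

/-- The deformed Newton sum `p_s = x₁^s + ... + xₙ^s + m^{(s-2)/2} x_{n+1}^s` over `ℂ`, written
with a square root `σ` of `m` as `m^{(s-2)/2} = σ^s/m`. -/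
noncomputable def deformedNewtonSumC (n m : ℕ) (σ : ℂ) (s : ℕ) :
    MvPolynomial (Fin (n + 1)) ℂ :=
  (∑ i : Fin n, X i.castSucc ^ s) + C (σ ^ s / (m : ℂ)) * X (Fin.last n) ^ s

/-- For `A_n(m)` with a positive integer `m`, the quotient `ℂ[x₁,...,x_{n+1}]/(p₁,...,p_{n+1})`
by the deformed Newton sums is finite-dimensional; equivalently, the radical of the ideal
`(p₁,...,p_{n+1})` is the maximal ideal `(x₁,...,x_{n+1})`. -/
theorem deformed_invariants_quotient_finiteDimensional (n m : ℕ) (hm : 1 ≤ m) (σ : ℂ)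
    (hσ : σ ^ 2 = (m : ℂ)) :
    FiniteDimensional ℂ
      (MvPolynomial (Fin (n + 1)) ℂ ⧸
        Ideal.span {q | ∃ s ∈ Finset.Icc 1 (n + 1), q = deformedNewtonSumC n m σ s}) ∧
    (Ideal.span {q | ∃ s ∈ Finset.Icc 1 (n + 1), q = deformedNewtonSumC n m σ s}).radical =
      Ideal.span (Set.range (X : Fin (n + 1) → MvPolynomial (Fin (n + 1)) ℂ)) := by
  classical
  set I : Ideal (MvPolynomial (Fin (n + 1)) ℂ) :=
    Ideal.span {q | ∃ s ∈ Finset.Icc 1 (n + 1), q = deformedNewtonSumC n m σ s} with hI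
  have hm0 : (m : ℂ) ≠ 0 := Nat.cast_ne_zero.mpr (by omega)
  have hσ0 : σ ≠ 0 := by
    intro h
    rw [h] at hσ
    exact hm0 (by simpa using hσ.symm)
  -- Step 1: the zero locus of I is {0}
  have hzl : MvPolynomial.zeroLocus ℂ I = {0} := by
    rw [hI, MvPolynomial.zeroLocus_span]
    ext x
    simp only [Set.mem_setOf_eq, Set.mem_singleton_iff]
    constructor
    · intro hx
      set v : Fin (n + 1) → ℂ :=
        Fin.snoc (fun i : Fin n => x i.castSucc) (σ * x (Fin.last n)) with hv
      set c : Fin (n + 1) → ℕ := Fin.snoc (fun _ : Fin n => m) 1 with hc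
      have hcpos : ∀ i, 0 < c i := by
        intro i
        induction i using Fin.lastCases with
        | last => simp [hc]
        | cast i => simp [hc]; omega
      have hall : ∀ i, v i = 0 := by
        refine weighted_newton_fin c hcpos v ?_
        intro s h1 h2
        have hps := hx (deformedNewtonSumC n m σ s)
          ⟨s, Finset.mem_Icc.mpr ⟨h1, h2⟩, rfl⟩
        simp only [deformedNewtonSumC, map_add, map_sum, map_mul, map_pow, aeval_X, aeval_C,
          Algebra.algebraMap_self, RingHom.id_apply]
          at hps
        rw [Fin.sum_univ_castSucc]
        simp only [hv, hc, Fin.snoc_castSucc, Fin.snoc_last, Nat.cast_one, one_mul]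
        have hexp : (σ * x (Fin.last n)) ^ s = (m : ℂ) * (σ ^ s / m * x (Fin.last n) ^ s) := by
          rw [mul_pow]
          field_simp
        have hms : ∑ i : Fin n, (m : ℂ) * x i.castSucc ^ s
            = (m : ℂ) * ∑ i : Fin n, x i.castSucc ^ s := by rw [Finset.mul_sum]
        rw [hexp, hms, ← mul_add, hps, mul_zero]
      funext i
      induction i using Fin.lastCases with
      | last =>
        have := hall (Fin.last n)
        simp only [hv, Fin.snoc_last] at this
        rcases mul_eq_zero.mp this with h | h
        · exact absurd h hσ0
        · simpa using h
      | cast i =>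
        have := hall i.castSucc
        simpa [hv, Fin.snoc_castSucc] using this
    · rintro rfl p ⟨s, hsmem, rfl⟩
      obtain ⟨h1, _⟩ := Finset.mem_Icc.mp hsmem
      simp [deformedNewtonSumC, zero_pow (show s ≠ 0 by omega)]
  -- Step 2: radical
  have hrad : I.radical = Ideal.span (Set.range (X : Fin (n + 1) → MvPolynomial (Fin (n + 1)) ℂ)) := by
    rw [← MvPolynomial.vanishingIdeal_zeroLocus_eq_radical (K := ℂ), hzl]
    apply le_antisymm
    · intro p hp
      apply mem_span_range_X_of_constantCoeff_eq_zero
      have := (MvPolynomial.mem_vanishingIdeal_singleton_iff 0 p).mp hp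
      rwa [MvPolynomial.aeval_zero, Algebra.algebraMap_self, RingHom.id_apply] at this
    · rw [Ideal.span_le]
      rintro _ ⟨i, rfl⟩
      rw [SetLike.mem_coe, MvPolynomial.mem_vanishingIdeal_singleton_iff]
      simp
  refine ⟨?_, hrad⟩
  -- Step 3: finiteness
  have hadj : Algebra.adjoin ℂ
      (Set.range fun i : Fin (n + 1) => Ideal.Quotient.mkₐ ℂ I (X i)) = ⊤ := by
    have h1 := MvPolynomial.adjoin_range_X (R := ℂ) (σ := Fin (n + 1))
    have h2 : (Algebra.adjoin ℂ (Set.range (X : Fin (n + 1) → MvPolynomial (Fin (n + 1)) ℂ))).map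
        (Ideal.Quotient.mkₐ ℂ I) = ⊤ := by
      rw [h1, Algebra.map_top]
      exact (AlgHom.range_eq_top _).mpr (Ideal.Quotient.mkₐ_surjective ℂ I)
    rw [AlgHom.map_adjoin, ← Set.range_comp] at h2
    exact h2
  have hint : Algebra.IsIntegral ℂ (MvPolynomial (Fin (n + 1)) ℂ ⧸ I) := by
    rw [← integralClosure_eq_top_iff, eq_top_iff, ← hadj]
    refine Algebra.adjoin_le ?_
    rintro _ ⟨i, rfl⟩
    have hXi : X i ∈ I.radical := by
      rw [hrad]
      exact Ideal.subset_span (Set.mem_range_self i)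
    obtain ⟨k, hk⟩ := hXi
    have hmem : (X i : MvPolynomial (Fin (n + 1)) ℂ) ^ (k + 1) ∈ I := by
      rw [pow_succ]
      exact Ideal.mul_mem_right _ _ hk
    have hnil : (Ideal.Quotient.mkₐ ℂ I (X i)) ^ (k + 1) = 0 := by
      rw [← map_pow]
      exact Ideal.Quotient.eq_zero_iff_mem.mpr hmem
    exact IsIntegral.of_pow (Nat.succ_pos k) (hnil ▸ isIntegral_zero)
  exact Algebra.IsIntegral.finite
end
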